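/- arXiv:0908.3167 — 7 statements merged into one kernel-verified Lean document; each statement's English description precedes it below -/
import Mathlib

section
/- Let R > 0, κ > 0, and let θ : I → ℝ be a differentiable function on an interval I satisfying θ'(t) = R sin θ(t) √(cos²θ(t) + κ²) for all t ∈ I. Define λ_θ(t) = R sin θ(t) (cos θ(t) + √(cos²θ(t) + κ²)) and λ_a = R κ²/2. Then λ_θ is differentiable and satisfies the adjoint equation λ_θ'(t) = λ_θ(t) R cos 2θ(t) + λ_a R sin 2θ(t) for all t ∈ I. -/
open Real

/-- Along the optimal trajectory `θ̇ = R sin θ √(cos²θ + κ²)`, the costate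
`λθ = R sin θ (cos θ + √(cos²θ + κ²))` satisfies the adjoint equation
`λ̇θ = λθ R cos 2θ + λa R sin 2θ` with `λa = R κ²/2`. -/
theorem stmt_4 (R κ lam_a : ℝ) (hR : 0 < R) (hκ : 0 < κ)
    (hlam_a : lam_a = R * κ ^ 2 / 2)
    (I : Set ℝ) (hI : I.OrdConnected) (θ : ℝ → ℝ)
    (hθ : ∀ t ∈ I, HasDerivWithinAt θ
      (R * Real.sin (θ t) * Real.sqrt (Real.cos (θ t) ^ 2 + κ ^ 2)) I t)
    (lθ : ℝ → ℝ)
    (hlθ : ∀ t, lθ t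
      = R * Real.sin (θ t) * (Real.cos (θ t) + Real.sqrt (Real.cos (θ t) ^ 2 + κ ^ 2))) :
    ∀ t ∈ I, HasDerivWithinAt lθ
      (lθ t * R * Real.cos (2 * θ t) + lam_a * R * Real.sin (2 * θ t)) I t := by
  intro t ht
  set x := θ t with hx
  have hpos : 0 < Real.cos x ^ 2 + κ ^ 2 := by positivity
  set s := Real.sqrt (Real.cos x ^ 2 + κ ^ 2) with hs
  have hspos : 0 < s := Real.sqrt_pos.mpr hpos
  have hs2 : s ^ 2 = Real.cos x ^ 2 + κ ^ 2 := Real.sq_sqrt hpos.le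
  -- derivative of the outer function f(y) = R sin y (cos y + √(cos²y+κ²)) at x
  have hinner : HasDerivAt (fun y => Real.cos y ^ 2 + κ ^ 2)
      (2 * Real.cos x ^ 1 * (-Real.sin x)) x :=
    ((Real.hasDerivAt_cos x).pow 2).add_const _
  have hsqrt : HasDerivAt (fun y => Real.sqrt (Real.cos y ^ 2 + κ ^ 2))
      (2 * Real.cos x ^ 1 * (-Real.sin x) / (2 * s)) x :=
    hinner.sqrt hpos.ne'
  have hf : HasDerivAt (fun y => R * Real.sin y * (Real.cos y + Real.sqrt (Real.cos y ^ 2 + κ ^ 2)))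
      (R * Real.cos x * (Real.cos x + s)
        + R * Real.sin x * (-Real.sin x + 2 * Real.cos x ^ 1 * (-Real.sin x) / (2 * s))) x :=
    ((Real.hasDerivAt_sin x).const_mul R).mul ((Real.hasDerivAt_cos x).add hsqrt)
  have hcomp := hf.comp_hasDerivWithinAt t (hθ t ht)
  have hfun : (fun y => R * Real.sin y * (Real.cos y + Real.sqrt (Real.cos y ^ 2 + κ ^ 2))) ∘ θ
      = lθ := by
    funext u; simp [Function.comp, hlθ u]
  rw [hfun] at hcomp
  refine HasDerivWithinAt.congr_deriv hcomp ?_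
  symm
  rw [hlθ t, hlam_a, Real.cos_two_mul, Real.sin_two_mul, ← hx, ← hs]
  have hsin2 : Real.sin x ^ 2 + Real.cos x ^ 2 = 1 := Real.sin_sq_add_cos_sq x
  field_simp
  linear_combination (-(Real.sin x * Real.cos x)) * hs2
    + (Real.sin x * (s + Real.cos x)) * hsin2
end

section
/- Let 0 < r < 1 and set κ = 2r/(1 − r²). Then ∫_0^{π/2} (sin θ / √(cos²θ + κ²)) dθ = ln(1/r). Moreover, κ = 2r/(1 − r²) is the unique positive number with this property. -/
open Real

lemma key_integral (κ : ℝ) (hκ : 0 < κ) :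
    (∫ θ in (0 : ℝ)..(π / 2), Real.sin θ / Real.sqrt (Real.cos θ ^ 2 + κ ^ 2))
      = Real.arsinh (1 / κ) := by
  have hκ' : κ ≠ 0 := ne_of_gt hκ
  have hderiv : ∀ θ ∈ Set.uIcc (0 : ℝ) (π / 2),
      HasDerivAt (fun t => -Real.arsinh (Real.cos t / κ))
        (Real.sin θ / Real.sqrt (Real.cos θ ^ 2 + κ ^ 2)) θ := by
    intro θ _
    have h1 : HasDerivAt (fun t => Real.cos t / κ) (-Real.sin θ / κ) θ :=
      (Real.hasDerivAt_cos θ).div_const κ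
    have h2 := (Real.hasDerivAt_arsinh (Real.cos θ / κ)).comp θ h1
    have h3 := h2.neg
    convert h3 using 1
    case e'_4 => rfl
    case e'_5 => rfl
    case e'_8 => rfl
    have hpos : (0:ℝ) < Real.cos θ ^ 2 + κ ^ 2 := by positivity
    have hsqrt : Real.sqrt (1 + (Real.cos θ / κ) ^ 2)
        = Real.sqrt (Real.cos θ ^ 2 + κ ^ 2) / κ := by
      rw [show (1 + (Real.cos θ / κ) ^ 2) = (Real.cos θ ^ 2 + κ ^ 2) / κ ^ 2 by
        field_simp; ring]
      rw [Real.sqrt_div hpos.le, Real.sqrt_sq hκ.le]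
    rw [hsqrt]
    have hs : Real.sqrt (Real.cos θ ^ 2 + κ ^ 2) ≠ 0 := by positivity
    field_simp
  have hcont : Continuous fun θ : ℝ => Real.sin θ / Real.sqrt (Real.cos θ ^ 2 + κ ^ 2) := by
    apply Continuous.div Real.continuous_sin
    · exact (Real.continuous_sqrt.comp (by continuity))
    · intro x
      positivity
  rw [intervalIntegral.integral_eq_sub_of_hasDerivAt hderiv
    (hcont.intervalIntegrable 0 (π / 2))]
  simp [Real.cos_pi_div_two, Real.arsinh_zero]

/-- For the optimal π/2 pulse, `κ = 2r/(1 - r²)` satisfies the magnetization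
loss constraint `∫₀^{π/2} sin θ/√(cos²θ + κ²) dθ = ln(1/r)`, and it is the
unique positive number with this property. -/
theorem stmt_6 (r κ : ℝ) (hr : 0 < r) (hr1 : r < 1) (hκ : κ = 2 * r / (1 - r ^ 2)) :
    (∫ θ in (0 : ℝ)..(π / 2), Real.sin θ / Real.sqrt (Real.cos θ ^ 2 + κ ^ 2))
        = Real.log (1 / r) ∧
      ∀ κ' : ℝ, 0 < κ' →
        (∫ θ in (0 : ℝ)..(π / 2), Real.sin θ / Real.sqrt (Real.cos θ ^ 2 + κ' ^ 2))
            = Real.log (1 / r) →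
          κ' = κ := by
  have hr2 : (0:ℝ) < 1 - r ^ 2 := by nlinarith
  have hκpos : 0 < κ := by rw [hκ]; positivity
  have hrinv : (0:ℝ) < 1 / r := by positivity
  have hsinh : Real.sinh (Real.log (1 / r)) = 1 / κ := by
    rw [Real.sinh_log hrinv, hκ]
    field_simp
  constructor
  · rw [key_integral κ hκpos, ← hsinh, Real.arsinh_sinh]
  · intro κ' hκ' hint
    rw [key_integral κ' hκ'] at hint
    have : Real.sinh (Real.arsinh (1 / κ')) = Real.sinh (Real.log (1 / r)) := by
      rw [hint]
    rw [Real.sinh_arsinh, hsinh] at this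
    field_simp at this
    exact this.symm
end

section
/- Let R > 0, 0 < r < 1, and κ = 2r/(1 − r²). Then the energy of the optimal π/2 pulse, expressed as an integral over the polar angle, satisfies ∫_0^{π/2} [R sin θ (cos θ + √(cos²θ + κ²))]² / (2 R sin θ √(cos²θ + κ²)) dθ = R/(1 − r²). -/
open Real

/-- The energy of the optimal π/2 pulse:
`∫₀^{π/2} [R sin θ (cos θ + √(cos²θ + κ²))]² / (2 R sin θ √(cos²θ + κ²)) dθ = R/(1 - r²)`
with `κ = 2r/(1 - r²)`. -/
theorem stmt_8 (R r κ : ℝ) (hR : 0 < R) (hr : 0 < r) (hr1 : r < 1)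
    (hκ : κ = 2 * r / (1 - r ^ 2)) :
    ∫ θ in (0 : ℝ)..(π / 2),
        (R * Real.sin θ * (Real.cos θ + Real.sqrt (Real.cos θ ^ 2 + κ ^ 2))) ^ 2
          / (2 * R * Real.sin θ * Real.sqrt (Real.cos θ ^ 2 + κ ^ 2))
      = R / (1 - r ^ 2) := by
  have h1r : (0:ℝ) < 1 - r ^ 2 := by nlinarith
  have hκ0 : 0 < κ := by rw [hκ]; positivity
  set g : ℝ → ℝ := fun θ =>
    R * Real.sin θ * (Real.cos θ + Real.sqrt (Real.cos θ ^ 2 + κ ^ 2)) ^ 2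
      / (2 * Real.sqrt (Real.cos θ ^ 2 + κ ^ 2)) with hg
  have hs : ∀ θ : ℝ, 0 < Real.sqrt (Real.cos θ ^ 2 + κ ^ 2) := fun θ =>
    Real.sqrt_pos.2 (by positivity)
  have heq : ∀ θ : ℝ,
      (R * Real.sin θ * (Real.cos θ + Real.sqrt (Real.cos θ ^ 2 + κ ^ 2))) ^ 2
        / (2 * R * Real.sin θ * Real.sqrt (Real.cos θ ^ 2 + κ ^ 2)) = g θ := by
    intro θ
    by_cases h : Real.sin θ = 0
    · simp [hg, h]
    · have h2 := hs θ
      rw [hg]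
      field_simp
  rw [intervalIntegral.integral_congr (fun θ _ => heq θ)]
  set F : ℝ → ℝ := fun θ =>
    -(R / 2) * (Real.cos θ ^ 2 + Real.cos θ * Real.sqrt (Real.cos θ ^ 2 + κ ^ 2)) with hF
  have hderiv : ∀ θ ∈ Set.uIcc (0:ℝ) (π/2), HasDerivAt F (g θ) θ := by
    intro θ _
    have hsθ := hs θ
    have hpos : 0 < Real.cos θ ^ 2 + κ ^ 2 := by positivity
    have h1 : HasDerivAt Real.cos (-Real.sin θ) θ := Real.hasDerivAt_cos θ
    have h2 : HasDerivAt (fun x => Real.cos x ^ 2 + κ ^ 2)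
        (2 * Real.cos θ * (-Real.sin θ)) θ := by
      simpa [mul_comm, mul_assoc] using ((h1.pow 2).add_const (κ ^ 2))
    have h3 : HasDerivAt (fun x => Real.sqrt (Real.cos x ^ 2 + κ ^ 2))
        (1 / (2 * Real.sqrt (Real.cos θ ^ 2 + κ ^ 2)) * (2 * Real.cos θ * (-Real.sin θ))) θ :=
      (Real.hasDerivAt_sqrt (ne_of_gt hpos)).comp θ h2
    have h4 : HasDerivAt (fun x => Real.cos x ^ 2) (2 * Real.cos θ * (-Real.sin θ)) θ := by
      simpa [mul_comm, mul_assoc] using h1.fun_pow 2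
    have h5 : HasDerivAt (fun x => Real.cos x * Real.sqrt (Real.cos x ^ 2 + κ ^ 2))
        ((-Real.sin θ) * Real.sqrt (Real.cos θ ^ 2 + κ ^ 2)
          + Real.cos θ * (1 / (2 * Real.sqrt (Real.cos θ ^ 2 + κ ^ 2)) * (2 * Real.cos θ * (-Real.sin θ)))) θ :=
      h1.mul h3
    have h6 : HasDerivAt (fun y => -(R / 2) * (Real.cos y ^ 2 + Real.cos y * Real.sqrt (Real.cos y ^ 2 + κ ^ 2))) _ θ :=
      ((h4.add h5).const_mul (-(R / 2)))
    convert h6 using 1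
    have hsq : Real.sqrt (Real.cos θ ^ 2 + κ ^ 2) ^ 2 = Real.cos θ ^ 2 + κ ^ 2 :=
      Real.sq_sqrt hpos.le
    rw [hg]
    field_simp
    nlinarith [hsq, hsθ]
  have hcont : Continuous g := by
    apply Continuous.div
    · fun_prop
    · fun_prop
    · intro θ
      exact ne_of_gt (by linarith [hs θ])
  rw [intervalIntegral.integral_eq_sub_of_hasDerivAt hderiv (hcont.intervalIntegrable _ _)]
  have hsqrt : Real.sqrt (1 + κ ^ 2) = (1 + r ^ 2) / (1 - r ^ 2) := by
    have h : 1 + κ ^ 2 = ((1 + r ^ 2) / (1 - r ^ 2)) ^ 2 := by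
      rw [hκ]; field_simp; ring
    rw [h, Real.sqrt_sq (by positivity)]
  simp only [hF, Real.cos_pi_div_two, Real.cos_zero]
  norm_num
  rw [hsqrt]
  field_simp
  ring
end

section
/- Let R > 0, 0 < r < 1, and κ = 2√r/(1 − r). Then the energy of the optimal π pulse, expressed as an integral over the polar angle, satisfies ∫_0^{π} [R sin θ (cos θ + √(cos²θ + κ²))]² / (2 R sin θ √(cos²θ + κ²)) dθ = R (1 + r)/(1 − r). -/
open Real

/-- The energy of the optimal π pulse:
`∫₀^{π} [R sin θ (cos θ + √(cos²θ + κ²))]² / (2 R sin θ √(cos²θ + κ²)) dθ = R(1 + r)/(1 - r)`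
with `κ = 2√r/(1 - r)`. -/
theorem stmt_9 (R r κ : ℝ) (hR : 0 < R) (hr : 0 < r) (hr1 : r < 1)
    (hκ : κ = 2 * Real.sqrt r / (1 - r)) :
    ∫ θ in (0 : ℝ)..π,
        (R * Real.sin θ * (Real.cos θ + Real.sqrt (Real.cos θ ^ 2 + κ ^ 2))) ^ 2
          / (2 * R * Real.sin θ * Real.sqrt (Real.cos θ ^ 2 + κ ^ 2))
      = R * (1 + r) / (1 - r) := by
  have h1r : 0 < 1 - r := by linarith
  have hκ2 : κ ^ 2 = 4 * r / (1 - r) ^ 2 := by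
    rw [hκ, div_pow]
    rw [mul_pow]
    rw [Real.sq_sqrt hr.le]
    ring
  have hκ2pos : 0 < κ ^ 2 := by rw [hκ2]; positivity
  have hpos : ∀ θ : ℝ, 0 < Real.cos θ ^ 2 + κ ^ 2 := fun θ => by positivity
  set s : ℝ → ℝ := fun θ => Real.sqrt (Real.cos θ ^ 2 + κ ^ 2) with hs
  have hspos : ∀ θ, 0 < s θ := fun θ => Real.sqrt_pos.2 (hpos θ)
  have hssq : ∀ θ, s θ ^ 2 = Real.cos θ ^ 2 + κ ^ 2 := fun θ => Real.sq_sqrt (hpos θ).le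
  set g : ℝ → ℝ := fun θ => R * Real.sin θ * (Real.cos θ + s θ) ^ 2 / (2 * s θ) with hg
  have heq : ∀ θ : ℝ,
      (R * Real.sin θ * (Real.cos θ + s θ)) ^ 2 / (2 * R * Real.sin θ * s θ) = g θ := by
    intro θ
    by_cases hθ : Real.sin θ = 0
    · simp [hg, hθ]
    · have hs0 := (hspos θ).ne'
      simp only [hg]
      field_simp [hg]
  set F : ℝ → ℝ := fun θ => -(R / 2) * (Real.cos θ * s θ + Real.cos θ ^ 2) with hF
  have hderiv : ∀ θ : ℝ, HasDerivAt F (g θ) θ := by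
    intro θ
    have h1 : HasDerivAt (fun θ : ℝ => Real.cos θ ^ 2 + κ ^ 2)
        (2 * Real.cos θ ^ 1 * (-Real.sin θ)) θ :=
      ((Real.hasDerivAt_cos θ).pow 2).add_const _
    have h2 : HasDerivAt s
        ((2 * Real.cos θ ^ 1 * (-Real.sin θ)) / (2 * s θ)) θ :=
      h1.sqrt (hpos θ).ne'
    have h3 : HasDerivAt F
        (-(R / 2) * ((-Real.sin θ) * s θ +
          Real.cos θ * ((2 * Real.cos θ ^ 1 * (-Real.sin θ)) / (2 * s θ)) +
          2 * Real.cos θ ^ 1 * (-Real.sin θ))) θ := by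
      exact (((Real.hasDerivAt_cos θ).mul h2).add ((Real.hasDerivAt_cos θ).pow 2)).const_mul _
    convert h3 using 1
    have hs0 := (hspos θ).ne'
    have hsq := hssq θ
    simp only [hg]
    field_simp [hg]
    nlinarith [hsq, sq_nonneg (s θ)]
  have hgcont : Continuous g := by
    apply Continuous.div
    · fun_prop
    · fun_prop
    · intro θ
      exact by positivity
  have hint : IntervalIntegrable g MeasureTheory.volume 0 π :=
    hgcont.intervalIntegrable _ _
  have key : ∫ θ in (0:ℝ)..π, g θ = F π - F 0 :=
    intervalIntegral.integral_eq_sub_of_hasDerivAt (fun θ _ => hderiv θ) hint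
  have hsqrt : Real.sqrt (1 + κ ^ 2) = (1 + r) / (1 - r) := by
    have : 1 + κ ^ 2 = ((1 + r) / (1 - r)) ^ 2 := by
      rw [hκ2, div_pow]
      field_simp
      ring
    rw [this, Real.sqrt_sq (by positivity)]
  calc ∫ θ in (0:ℝ)..π,
        (R * Real.sin θ * (Real.cos θ + s θ)) ^ 2 / (2 * R * Real.sin θ * s θ)
      = ∫ θ in (0:ℝ)..π, g θ := by
        apply intervalIntegral.integral_congr
        intro θ _
        exact heq θ
    _ = F π - F 0 := key
    _ = R * (1 + r) / (1 - r) := by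
        simp only [hF, hs, Real.cos_pi, Real.cos_zero]
        rw [show ((-1:ℝ)) ^ 2 = 1 by ring, show ((1:ℝ)) ^ 2 = 1 by ring] at *
        rw [hsqrt]
        field_simp
        ring
end

section
/- Let R > 0, 0 < r < 1, and κ = 2r/(1 − r²). Then the duration T(ε) = ∫_ε^{π/2} dθ / (R sin θ √(cos²θ + κ²)) of the optimal π/2 pulse started at θ(0) = ε satisfies lim_{ε → 0⁺} [ T(ε) + (1/R)·((1 − r²)/(1 + r²))·ln ε ] = (1/R)·((1 − r²)/(1 + r²))·ln((1 + r²)/r). In other words, T(ε) = (1/R)((1 − r²)/(1 + r²))[ln((1 + r²)/r) − ln ε] + o(1) as ε → 0⁺. -/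
open Real Filter

private lemma deriv_algebra (R s κ a si co : ℝ) (hR : 0 < R) (hs : 0 < s)
    (hsi : 0 < si) (ha : 0 < a) (hAs : 0 < a + s * co)
    (hA2 : a ^ 2 = co ^ 2 + κ ^ 2) (hs2 : s ^ 2 = 1 + κ ^ 2)
    (hsc : si ^ 2 + co ^ 2 = 1) :
    -(1 / (R * s)) * ((2 * co * -si / (2 * a) + s * -si) / (a + s * co) - co / si)
      = 1 / (R * si * a) := by
  field_simp
  linear_combination (co + s*a) * hsc + co * hA2 - co * hs2

/-- Asymptotics of the duration of the optimal π/2 pulse: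
`T(ε) = (1/R)((1-r²)/(1+r²))[ln((1+r²)/r) - ln ε] + o(1)` as `ε → 0⁺`, i.e.
`T(ε) + (1/R)((1-r²)/(1+r²)) ln ε → (1/R)((1-r²)/(1+r²)) ln((1+r²)/r)`. -/
theorem stmt_10 (R r κ : ℝ) (hR : 0 < R) (hr : 0 < r) (hr1 : r < 1)
    (hκ : κ = 2 * r / (1 - r ^ 2)) :
    Filter.Tendsto
      (fun ε : ℝ =>
        (∫ θ in ε..(π / 2),
            1 / (R * Real.sin θ * Real.sqrt (Real.cos θ ^ 2 + κ ^ 2)))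
          + (1 / R) * ((1 - r ^ 2) / (1 + r ^ 2)) * Real.log ε)
      (nhdsWithin 0 (Set.Ioi 0))
      (nhds ((1 / R) * ((1 - r ^ 2) / (1 + r ^ 2)) * Real.log ((1 + r ^ 2) / r))) := by
  have h1r2 : (0:ℝ) < 1 - r ^ 2 := by nlinarith
  have h1r2' : (0:ℝ) < 1 + r ^ 2 := by nlinarith
  obtain ⟨s, hs⟩ : ∃ s : ℝ, s = (1 + r ^ 2) / (1 - r ^ 2) := ⟨_, rfl⟩
  have hspos : 0 < s := hs ▸ div_pos h1r2' h1r2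
  have hκpos : 0 < κ := by rw [hκ]; positivity
  have hs2 : s ^ 2 = 1 + κ ^ 2 := by
    rw [hκ, hs]; field_simp; ring
  obtain ⟨c, hc⟩ : ∃ c : ℝ, c = 1 / (R * s) := ⟨_, rfl⟩
  have hcc : (1 / R) * ((1 - r ^ 2) / (1 + r ^ 2)) = c := by
    rw [hc, hs]; field_simp
  set A : ℝ → ℝ := fun θ => Real.sqrt (Real.cos θ ^ 2 + κ ^ 2) with hA
  set H : ℝ → ℝ := fun θ =>
    -c * (Real.log (A θ + s * Real.cos θ) - Real.log κ - Real.log (Real.sin θ)) with hH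
  have hApos : ∀ θ, 0 < A θ := fun θ => Real.sqrt_pos.2 (by positivity)
  have hderiv : ∀ θ ∈ Set.Icc (0:ℝ) (π/2), θ ≠ 0 →
      HasDerivAt H (1 / (R * Real.sin θ * A θ)) θ := by
    intro θ hθ hθ0
    have hθpos : 0 < θ := lt_of_le_of_ne hθ.1 (Ne.symm hθ0)
    have hsin : 0 < Real.sin θ :=
      Real.sin_pos_of_pos_of_lt_pi hθpos (lt_of_le_of_lt hθ.2 (by
        have := Real.pi_pos; linarith))
    have hcos : 0 ≤ Real.cos θ :=
      Real.cos_nonneg_of_mem_Icc ⟨by linarith [hθ.1, Real.pi_pos], hθ.2⟩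
    have hApos' : 0 < A θ := hApos θ
    have hAs : 0 < A θ + s * Real.cos θ := by positivity
    have h1 : HasDerivAt (fun x => Real.cos x ^ 2 + κ ^ 2)
        (2 * Real.cos θ * (-Real.sin θ)) θ := by
      have := ((Real.hasDerivAt_cos θ).fun_pow 2).add_const (κ ^ 2)
      exact this.congr_deriv (by norm_num)
    have h2 : HasDerivAt A (2 * Real.cos θ * (-Real.sin θ) / (2 * A θ)) θ :=
      h1.sqrt (by positivity)
    have h3 : HasDerivAt (fun x => A x + s * Real.cos x)
        (2 * Real.cos θ * (-Real.sin θ) / (2 * A θ) + s * (-Real.sin θ)) θ :=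
      h2.add ((Real.hasDerivAt_cos θ).const_mul s)
    have h4 : HasDerivAt (fun x => Real.log (A x + s * Real.cos x))
        ((2 * Real.cos θ * (-Real.sin θ) / (2 * A θ) + s * (-Real.sin θ)) /
          (A θ + s * Real.cos θ)) θ := h3.log hAs.ne'
    have h5 : HasDerivAt (fun x => Real.log (Real.sin x))
        (Real.cos θ / Real.sin θ) θ := (Real.hasDerivAt_sin θ).log hsin.ne'
    have h6 := (((h4.sub_const (Real.log κ)).sub h5).const_mul (-c))
    have hA2 : A θ ^ 2 = Real.cos θ ^ 2 + κ ^ 2 := Real.sq_sqrt (by positivity)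
    have hsc : Real.sin θ ^ 2 + Real.cos θ ^ 2 = 1 := Real.sin_sq_add_cos_sq θ
    have key := deriv_algebra R s κ (A θ) (Real.sin θ) (Real.cos θ)
      hR hspos hsin hApos' hAs hA2 hs2 hsc
    have heq : -c * ((2 * Real.cos θ * -Real.sin θ / (2 * A θ) + s * -Real.sin θ) /
        (A θ + s * Real.cos θ) - Real.cos θ / Real.sin θ) = 1 / (R * Real.sin θ * A θ) := by
      rw [hc, neg_mul, ← neg_mul, ← hc]
      rw [hc]
      exact key
    exact heq ▸ h6
  have hπ2 : (0:ℝ) < π / 2 := by positivity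
  have hval : ∀ ε ∈ Set.Ioo (0:ℝ) (π/2),
      (∫ θ in ε..(π/2), 1 / (R * Real.sin θ * A θ)) = H (π/2) - H ε := by
    intro ε hε
    apply intervalIntegral.integral_eq_sub_of_hasDerivAt
    · intro θ hθ
      rw [Set.uIcc_of_le hε.2.le] at hθ
      exact hderiv θ ⟨le_trans hε.1.le hθ.1, hθ.2⟩ (by linarith [hθ.1, hε.1])
    · apply ContinuousOn.intervalIntegrable
      apply ContinuousOn.div continuousOn_const
      · exact ((continuous_const.mul Real.continuous_sin).mul
          (Real.continuous_sqrt.comp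
            ((Real.continuous_cos.pow 2).add continuous_const))).continuousOn
      · intro θ hθ
        rw [Set.uIcc_of_le hε.2.le] at hθ
        have hθpos : 0 < θ := lt_of_lt_of_le hε.1 hθ.1
        have hsin : 0 < Real.sin θ :=
          Real.sin_pos_of_pos_of_lt_pi hθpos (lt_of_le_of_lt hθ.2 (by
            have := Real.pi_pos; linarith))
        have := hApos θ
        positivity
  have hH2 : H (π/2) = 0 := by
    have h1 : A (π/2) = κ := by
      rw [hA]; simp [Real.cos_pi_div_two]
      exact Real.sqrt_sq hκpos.le
    rw [hH]; simp [h1, Real.cos_pi_div_two, Real.sin_pi_div_two]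
  have hlim2s : 0 < 2 * s := by linarith
  have hA0 : A 0 = s := by
    rw [hA]; simp only [Real.cos_zero, one_pow]
    rw [← hs2]; exact Real.sqrt_sq hspos.le
  have hval2 : (1 / R) * ((1 - r ^ 2) / (1 + r ^ 2)) * Real.log ((1 + r ^ 2) / r)
      = c * (Real.log (2 * s) - Real.log κ) := by
    rw [hcc]
    congr 1
    rw [← Real.log_div hlim2s.ne' hκpos.ne']
    congr 1
    rw [hκ, hs]; field_simp
  rw [hval2]
  have key : Tendsto (fun ε : ℝ => c * ((Real.log (A ε + s * Real.cos ε) - Real.log κ)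
      - Real.log (Real.sin ε / ε)))
      (nhdsWithin 0 (Set.Ioi 0)) (nhds (c * (Real.log (2 * s) - Real.log κ))) := by
    have t1 : Tendsto (fun ε : ℝ => Real.log (A ε + s * Real.cos ε)) (nhds 0)
        (nhds (Real.log (2 * s))) := by
      have hcont : ContinuousAt (fun ε : ℝ => A ε + s * Real.cos ε) 0 :=
        (((Real.continuous_sqrt.comp
            ((Real.continuous_cos.pow 2).add continuous_const)).add
          (continuous_const.mul Real.continuous_cos))).continuousAt
      have h20 : A 0 + s * Real.cos 0 = 2 * s := by rw [hA0]; simp; ring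
      have h := ((Real.continuousAt_log (by rw [h20]; exact hlim2s.ne')).comp
        hcont).tendsto
      simpa only [Function.comp_def, h20] using h
    have t2 : Tendsto (fun ε : ℝ => Real.log (Real.sin ε / ε))
        (nhdsWithin 0 (Set.Ioi 0)) (nhds 0) := by
      have hslope : Tendsto (fun ε : ℝ => Real.sin ε / ε)
          (nhdsWithin 0 {(0:ℝ)}ᶜ) (nhds 1) := by
        have h := Real.hasDerivAt_sin 0
        rw [hasDerivAt_iff_tendsto_slope] at h
        rw [Real.cos_zero] at h
        refine h.congr fun ε => ?_
        simp [slope_def_field]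
      have hslope' : Tendsto (fun ε : ℝ => Real.sin ε / ε)
          (nhdsWithin 0 (Set.Ioi 0)) (nhds 1) :=
        hslope.mono_left (nhdsWithin_mono _ (fun x hx => ne_of_gt hx))
      have h := (Real.continuousAt_log one_ne_zero).tendsto.comp hslope'
      simpa [Function.comp_def] using h
    have := (((t1.mono_left nhdsWithin_le_nhds).sub_const (Real.log κ)).sub t2).const_mul c
    simpa using this
  refine key.congr' ?_
  filter_upwards [Ioo_mem_nhdsGT_of_mem ⟨le_refl (0:ℝ), hπ2⟩] with ε hε
  have hεpos : 0 < ε := hε.1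
  have hsinε : 0 < Real.sin ε :=
    Real.sin_pos_of_pos_of_lt_pi hεpos (lt_trans hε.2 (by have := Real.pi_pos; linarith))
  rw [hval ε hε, hH2, hH, hcc]
  rw [Real.log_div hsinε.ne' hεpos.ne']
  ring
end

section
/- Let R > 0, 0 < r < 1, and κ = 2√r/(1 − r). Then the duration T(ε) = ∫_ε^{π−ε} dθ / (R sin θ √(cos²θ + κ²)) of the optimal π pulse started at θ(0) = ε and ended at θ(T) = π − ε satisfies lim_{ε → 0⁺} [ T(ε) + (2/R)·((1 − r)/(1 + r))·ln ε ] = (1/R)·((1 − r)/(1 + r))·ln((1 + r)²/r). In other words, T(ε) = (1/R)((1 − r)/(1 + r))[ln((1 + r)²/r) − 2 ln ε] + o(1) as ε → 0⁺. -/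
open Real Filter


theorem alg_id (R s κ c sn q : ℝ) (hR : R ≠ 0) (hs : s ≠ 0) (hsn : sn ≠ 0)
    (hq0 : q ≠ 0) (hN0 : q + c*s ≠ 0) (hD0 : q - c*s ≠ 0)
    (hq2 : q^2 = c^2+κ^2) (hsn2 : sn^2 = 1 - c^2) (hκ2 : κ^2 = s^2 - 1) :
    1/(R*sn*q) = -(1/(2*R*s)) * ((2*c*(-sn)/(2*q) + (-sn)*s)/(q+c*s) - (2*c*(-sn)/(2*q) - (-sn)*s)/(q-c*s)) := by
  have hN' : q + s*c ≠ 0 := by rwa [mul_comm]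
  have hD' : q - s*c ≠ 0 := by rwa [mul_comm]
  field_simp
  linear_combination (-2*s*(q^2-c^2))*hsn2 + 2*s*c^2*hq2 + 2*s*c^2*hκ2

theorem aux_deriv (R s κ : ℝ) (hR : 0 < R) (hs : 1 < s) (hκ2 : κ ^ 2 = s ^ 2 - 1)
    {θ : ℝ} (h0 : 0 < θ) (hπ : θ < π) :
    HasDerivAt (fun t : ℝ =>
      -(1 / (2 * R * s)) *
        (Real.log (Real.sqrt (Real.cos t ^ 2 + κ ^ 2) + Real.cos t * s) -
         Real.log (Real.sqrt (Real.cos t ^ 2 + κ ^ 2) - Real.cos t * s)))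
      (1 / (R * Real.sin θ * Real.sqrt (Real.cos θ ^ 2 + κ ^ 2))) θ := by
  have hκ2pos : 0 < κ ^ 2 := by nlinarith
  have hsn : 0 < Real.sin θ := Real.sin_pos_of_pos_of_lt_pi h0 hπ
  have hsn2 : Real.sin θ ^ 2 = 1 - Real.cos θ ^ 2 := by
    have := Real.sin_sq_add_cos_sq θ; linarith
  have hargpos : 0 < Real.cos θ ^ 2 + κ ^ 2 := by positivity
  have hq0 : 0 < Real.sqrt (Real.cos θ ^ 2 + κ ^ 2) := Real.sqrt_pos.mpr hargpos
  have hq2 : Real.sqrt (Real.cos θ ^ 2 + κ ^ 2) ^ 2 = Real.cos θ ^ 2 + κ ^ 2 :=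
    Real.sq_sqrt hargpos.le
  have key : (Real.sqrt (Real.cos θ ^ 2 + κ ^ 2) - Real.cos θ * s) *
      (Real.sqrt (Real.cos θ ^ 2 + κ ^ 2) + Real.cos θ * s) = κ ^ 2 * Real.sin θ ^ 2 := by
    linear_combination hq2 - κ ^ 2 * hsn2 + Real.cos θ ^ 2 * hκ2
  have hD0 : 0 < Real.sqrt (Real.cos θ ^ 2 + κ ^ 2) - Real.cos θ * s := by
    nlinarith [mul_pos hκ2pos (mul_pos hsn hsn)]
  have hN0 : 0 < Real.sqrt (Real.cos θ ^ 2 + κ ^ 2) + Real.cos θ * s := by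
    nlinarith [mul_pos hκ2pos (mul_pos hsn hsn)]
  have hcos : HasDerivAt Real.cos (-Real.sin θ) θ := Real.hasDerivAt_cos θ
  have harg : HasDerivAt (fun t => Real.cos t ^ 2 + κ ^ 2) (2 * Real.cos θ * (-Real.sin θ)) θ := by
    simpa using (hcos.pow 2).add_const (κ ^ 2)
  have hq' : HasDerivAt (fun t => Real.sqrt (Real.cos t ^ 2 + κ ^ 2))
      (2 * Real.cos θ * (-Real.sin θ) / (2 * Real.sqrt (Real.cos θ ^ 2 + κ ^ 2))) θ :=
    harg.sqrt (ne_of_gt hargpos)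
  have hN : HasDerivAt (fun t => Real.sqrt (Real.cos t ^ 2 + κ ^ 2) + Real.cos t * s)
      (2 * Real.cos θ * (-Real.sin θ) / (2 * Real.sqrt (Real.cos θ ^ 2 + κ ^ 2)) + (-Real.sin θ) * s) θ :=
    hq'.add (hcos.mul_const s)
  have hD : HasDerivAt (fun t => Real.sqrt (Real.cos t ^ 2 + κ ^ 2) - Real.cos t * s)
      (2 * Real.cos θ * (-Real.sin θ) / (2 * Real.sqrt (Real.cos θ ^ 2 + κ ^ 2)) - (-Real.sin θ) * s) θ :=
    hq'.sub (hcos.mul_const s)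
  have hlogN := hN.log (ne_of_gt hN0)
  have hlogD := hD.log (ne_of_gt hD0)
  have hG := (hlogN.sub hlogD).const_mul (-(1 / (2 * R * s)))
  refine hG.congr_deriv ?_
  exact (alg_id R s κ (Real.cos θ) (Real.sin θ) (Real.sqrt (Real.cos θ ^ 2 + κ ^ 2))
    (ne_of_gt hR) (by positivity) (ne_of_gt hsn) (ne_of_gt hq0) (ne_of_gt hN0) (ne_of_gt hD0)
    hq2 hsn2 hκ2).symm

/-- Asymptotics of the duration of the optimal π pulse:
`T(ε) = (1/R)((1-r)/(1+r))[ln((1+r)²/r) - 2 ln ε] + o(1)` as `ε → 0⁺`, i.e.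
`T(ε) + (2/R)((1-r)/(1+r)) ln ε → (1/R)((1-r)/(1+r)) ln((1+r)²/r)`. -/
theorem stmt_11 (R r κ : ℝ) (hR : 0 < R) (hr : 0 < r) (hr1 : r < 1)
    (hκ : κ = 2 * Real.sqrt r / (1 - r)) :
    Filter.Tendsto
      (fun ε : ℝ =>
        (∫ θ in ε..(π - ε),
            1 / (R * Real.sin θ * Real.sqrt (Real.cos θ ^ 2 + κ ^ 2)))
          + (2 / R) * ((1 - r) / (1 + r)) * Real.log ε)
      (nhdsWithin 0 (Set.Ioi 0))
      (nhds ((1 / R) * ((1 - r) / (1 + r)) * Real.log ((1 + r) ^ 2 / r))) := by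
  have h1r : 0 < 1 - r := by linarith
  have h1r' : 0 < 1 + r := by linarith
  obtain ⟨s, hs_def⟩ : ∃ s : ℝ, s = (1 + r) / (1 - r) := ⟨_, rfl⟩
  have hs1 : 1 < s := by rw [hs_def, lt_div_iff₀ h1r]; linarith
  have hspos : 0 < s := by linarith
  have hκpos : 0 < κ := by
    rw [hκ]; exact div_pos (mul_pos two_pos (Real.sqrt_pos.mpr hr)) h1r
  have hκ2' : κ ^ 2 = 4 * r / (1 - r) ^ 2 := by
    rw [hκ, div_pow, mul_pow, Real.sq_sqrt hr.le]; ring_nf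
  have hκ2 : κ ^ 2 = s ^ 2 - 1 := by
    rw [hκ2', hs_def]; field_simp; ring
  have hsinv : (1 - r) / (1 + r) = 1 / s := by
    rw [hs_def, one_div_div]
  have hκppos : (0:ℝ) < κ ^ 2 := by positivity
  have hmem : Set.Ioo (0:ℝ) (π/2) ∈ nhdsWithin (0:ℝ) (Set.Ioi 0) :=
    Ioo_mem_nhdsGT_of_mem ⟨le_refl 0, Real.pi_div_two_pos⟩
  -- eventual equality with the explicit formula
  have heq : (fun ε : ℝ => (1/(R*s)) * (2*Real.log (Real.sqrt (Real.cos ε^2 + κ^2) + Real.cos ε*s)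
        - 2*Real.log κ + 2*Real.log (ε/Real.sin ε)))
      =ᶠ[nhdsWithin (0:ℝ) (Set.Ioi 0)]
      (fun ε : ℝ =>
        (∫ θ in ε..(π - ε),
            1 / (R * Real.sin θ * Real.sqrt (Real.cos θ ^ 2 + κ ^ 2)))
          + (2 / R) * ((1 - r) / (1 + r)) * Real.log ε) := by
    apply Filter.eventuallyEq_of_mem hmem
    intro ε hε
    obtain ⟨hε1, hε2⟩ := hε
    have hεπ : ε < π := by linarith [Real.pi_pos]
    have hle : ε ≤ π - ε := by linarith
    have hInt : IntervalIntegrable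
        (fun θ => 1 / (R * Real.sin θ * Real.sqrt (Real.cos θ ^ 2 + κ ^ 2)))
        MeasureTheory.volume ε (π - ε) := by
      apply ContinuousOn.intervalIntegrable
      apply ContinuousOn.div continuousOn_const
      · exact ((continuous_const.mul Real.continuous_sin).mul
          (Real.continuous_sqrt.comp ((Real.continuous_cos.pow 2).add continuous_const))).continuousOn
      · intro x hx
        rw [Set.uIcc_of_le hle] at hx
        have hsx : 0 < Real.sin x :=
          Real.sin_pos_of_pos_of_lt_pi (lt_of_lt_of_le hε1 hx.1) (lt_of_le_of_lt hx.2 (by linarith))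
        have hax : 0 < Real.cos x ^ 2 + κ ^ 2 := by positivity
        exact ne_of_gt (mul_pos (mul_pos hR hsx) (Real.sqrt_pos.mpr hax))
    have hFTC : (∫ θ in ε..(π - ε),
            1 / (R * Real.sin θ * Real.sqrt (Real.cos θ ^ 2 + κ ^ 2)))
        = (fun t : ℝ => -(1 / (2 * R * s)) *
            (Real.log (Real.sqrt (Real.cos t ^ 2 + κ ^ 2) + Real.cos t * s) -
             Real.log (Real.sqrt (Real.cos t ^ 2 + κ ^ 2) - Real.cos t * s))) (π - ε)
          - (fun t : ℝ => -(1 / (2 * R * s)) *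
            (Real.log (Real.sqrt (Real.cos t ^ 2 + κ ^ 2) + Real.cos t * s) -
             Real.log (Real.sqrt (Real.cos t ^ 2 + κ ^ 2) - Real.cos t * s))) ε := by
      exact intervalIntegral.integral_eq_sub_of_hasDerivAt
        (fun θ hθ => by
          rw [Set.uIcc_of_le hle] at hθ
          exact aux_deriv R s κ hR hs1 hκ2 (lt_of_lt_of_le hε1 hθ.1)
            (lt_of_le_of_lt hθ.2 (by linarith)))
        hInt
    -- facts at ε
    have hsinε : 0 < Real.sin ε := Real.sin_pos_of_pos_of_lt_pi hε1 hεπ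
    have hsn2 : Real.sin ε ^ 2 = 1 - Real.cos ε ^ 2 := by
      have := Real.sin_sq_add_cos_sq ε; linarith
    have hκ2pos : 0 < κ ^ 2 := by positivity
    have hargpos : 0 < Real.cos ε ^ 2 + κ ^ 2 := by positivity
    have hq0 : 0 < Real.sqrt (Real.cos ε ^ 2 + κ ^ 2) := Real.sqrt_pos.mpr hargpos
    have hq2 : Real.sqrt (Real.cos ε ^ 2 + κ ^ 2) ^ 2 = Real.cos ε ^ 2 + κ ^ 2 :=
      Real.sq_sqrt hargpos.le
    have key : (Real.sqrt (Real.cos ε ^ 2 + κ ^ 2) - Real.cos ε * s) *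
        (Real.sqrt (Real.cos ε ^ 2 + κ ^ 2) + Real.cos ε * s) = κ ^ 2 * Real.sin ε ^ 2 := by
      linear_combination hq2 - κ ^ 2 * hsn2 + Real.cos ε ^ 2 * hκ2
    have hD0 : 0 < Real.sqrt (Real.cos ε ^ 2 + κ ^ 2) - Real.cos ε * s := by
      nlinarith [mul_pos hκ2pos (mul_pos hsinε hsinε)]
    have hN0 : 0 < Real.sqrt (Real.cos ε ^ 2 + κ ^ 2) + Real.cos ε * s := by
      nlinarith [mul_pos hκ2pos (mul_pos hsinε hsinε)]
    have hlogD : Real.log (Real.sqrt (Real.cos ε ^ 2 + κ ^ 2) - Real.cos ε * s)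
        = 2*Real.log κ + 2*Real.log (Real.sin ε)
          - Real.log (Real.sqrt (Real.cos ε ^ 2 + κ ^ 2) + Real.cos ε * s) := by
      have hDval : Real.sqrt (Real.cos ε ^ 2 + κ ^ 2) - Real.cos ε * s
          = κ ^ 2 * Real.sin ε ^ 2 / (Real.sqrt (Real.cos ε ^ 2 + κ ^ 2) + Real.cos ε * s) := by
        rw [eq_div_iff (ne_of_gt hN0)]; linear_combination key
      rw [hDval, Real.log_div (ne_of_gt (mul_pos (pow_pos hκpos 2) (pow_pos hsinε 2))) (ne_of_gt hN0),
        Real.log_mul (ne_of_gt (pow_pos hκpos 2)) (ne_of_gt (pow_pos hsinε 2)),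
        Real.log_pow, Real.log_pow]
      push_cast; ring
    have hlogsin : Real.log (ε / Real.sin ε) = Real.log ε - Real.log (Real.sin ε) :=
      Real.log_div (ne_of_gt hε1) (ne_of_gt hsinε)
    dsimp only
    rw [hFTC]
    simp only [Real.cos_pi_sub, neg_sq, neg_mul, ← sub_eq_add_neg, sub_neg_eq_add]
    rw [hsinv, hlogD, hlogsin]
    ring
  -- the limit of the explicit formula
  have hone : Tendsto (fun x : ℝ => x / Real.sin x) (nhdsWithin (0:ℝ) (Set.Ioi 0)) (nhds 1) := by
    have h := Real.hasDerivAt_sin 0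
    rw [hasDerivAt_iff_tendsto_slope] at h
    have h2 : Tendsto (fun x : ℝ => x⁻¹ * Real.sin x) (nhdsWithin (0:ℝ) {(0:ℝ)}ᶜ) (nhds 1) := by
      simpa [slope_fun_def, Real.cos_zero] using h
    have h3 := h2.mono_left (nhdsWithin_mono 0 (fun x hx => Set.mem_compl_singleton_iff.mpr (ne_of_gt hx)))
    simpa [mul_inv, inv_inv, div_eq_mul_inv, mul_comm] using (show Tendsto (fun x : ℝ => (x⁻¹ * Real.sin x)⁻¹) (nhdsWithin (0:ℝ) (Set.Ioi 0)) (nhds (1:ℝ)⁻¹) from h3.inv₀ one_ne_zero)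
  have hlog1 : Tendsto (fun x : ℝ => Real.log (x / Real.sin x)) (nhdsWithin (0:ℝ) (Set.Ioi 0)) (nhds 0) := by
    have := (Real.continuousAt_log one_ne_zero).tendsto.comp hone
    simpa [Function.comp_def] using this
  have hNlim : Tendsto (fun x : ℝ => Real.log (Real.sqrt (Real.cos x ^ 2 + κ ^ 2) + Real.cos x * s))
      (nhdsWithin (0:ℝ) (Set.Ioi 0)) (nhds (Real.log (2*s))) := by
    have hcont : Continuous (fun x : ℝ => Real.sqrt (Real.cos x ^ 2 + κ ^ 2) + Real.cos x * s) :=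
      (Real.continuous_sqrt.comp ((Real.continuous_cos.pow 2).add continuous_const)).add
        (Real.continuous_cos.mul continuous_const)
    have hval : Real.sqrt (Real.cos 0 ^ 2 + κ ^ 2) + Real.cos 0 * s = 2*s := by
      rw [Real.cos_zero, one_pow, show (1:ℝ) + κ ^ 2 = s ^ 2 by linarith, Real.sqrt_sq hspos.le]
      ring
    have h1 : Tendsto (fun x : ℝ => Real.sqrt (Real.cos x ^ 2 + κ ^ 2) + Real.cos x * s)
        (nhdsWithin (0:ℝ) (Set.Ioi 0)) (nhds (2*s)) := by
      have := hcont.tendsto 0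
      rw [hval] at this
      exact this.mono_left nhdsWithin_le_nhds
    exact (Real.continuousAt_log (by positivity)).tendsto.comp h1
  have hφ : Tendsto (fun ε : ℝ => (1/(R*s)) * (2*Real.log (Real.sqrt (Real.cos ε^2 + κ^2) + Real.cos ε*s)
        - 2*Real.log κ + 2*Real.log (ε/Real.sin ε)))
      (nhdsWithin (0:ℝ) (Set.Ioi 0))
      (nhds ((1/(R*s)) * (2*Real.log (2*s) - 2*Real.log κ + 2*0))) :=
    (((hNlim.const_mul 2).sub_const (2*Real.log κ)).add (hlog1.const_mul 2)).const_mul (1/(R*s))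
  have hfinal : (1/(R*s)) * (2*Real.log (2*s) - 2*Real.log κ + 2*0)
      = (1 / R) * ((1 - r) / (1 + r)) * Real.log ((1 + r) ^ 2 / r) := by
    have h4s : (1+r)^2/r = (2*s)^2/κ^2 := by
      rw [hκ2', hs_def]; field_simp; ring
    have hlogeq : Real.log ((1+r)^2/r) = 2*Real.log (2*s) - 2*Real.log κ := by
      rw [h4s, Real.log_div (by positivity) (ne_of_gt hκppos), Real.log_pow, Real.log_pow]
      push_cast; ring
    rw [hlogeq, hsinv]; ring
  rw [show (1 / R) * ((1 - r) / (1 + r)) * Real.log ((1 + r) ^ 2 / r)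
      = (1/(R*s)) * (2*Real.log (2*s) - 2*Real.log κ + 2*0) from hfinal.symm]
  exact Filter.Tendsto.congr' heq hφ
end

section
/- Let R > 0, κ > 0, 0 < ε < β ≤ π, and suppose θ : [0, T] → ℝ is differentiable with θ(0) = ε, θ(T) = β, θ(t) ∈ (0, π) for all t, and θ'(t) = R sin θ(t) √(cos²θ(t) + κ²) for all t ∈ [0, T]. If a : [0, T] → ℝ is differentiable with a(0) = 0 and a'(t) = −R sin²θ(t), then a(T) = −∫_ε^{β} (sin θ / √(cos²θ + κ²)) dθ. In particular, the final magnetization ratio M(T)/M(0) = e^{a(T)} equals exp(−∫_ε^{β} sin θ/√(cos²θ + κ²) dθ). -/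
open Real

/-- Changing the integration variable from time to angle in `ȧ = -R sin²θ`
along the optimal trajectory `θ̇ = R sin θ √(cos²θ + κ²)`:
`a(T) = -∫_ε^β sin θ/√(cos²θ + κ²) dθ`, so the final magnetization ratio is
`M(T)/M(0) = e^{a(T)} = exp(-∫_ε^β sin θ/√(cos²θ + κ²) dθ)`. -/
theorem stmt_13 (R κ ε β T : ℝ) (hR : 0 < R) (hκ : 0 < κ)
    (hε : 0 < ε) (hεβ : ε < β) (hβ : β ≤ π) (hT : 0 ≤ T)
    (θ : ℝ → ℝ) (hθ0 : θ 0 = ε) (hθT : θ T = β)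
    (hrange : ∀ t ∈ Set.Icc 0 T, θ t ∈ Set.Ioo 0 π)
    (hderiv : ∀ t ∈ Set.Icc 0 T, HasDerivWithinAt θ
      (R * Real.sin (θ t) * Real.sqrt (Real.cos (θ t) ^ 2 + κ ^ 2)) (Set.Icc 0 T) t)
    (a : ℝ → ℝ) (ha0 : a 0 = 0)
    (haderiv : ∀ t ∈ Set.Icc 0 T,
      HasDerivWithinAt a (-R * Real.sin (θ t) ^ 2) (Set.Icc 0 T) t) :
    a T = -∫ x in ε..β, Real.sin x / Real.sqrt (Real.cos x ^ 2 + κ ^ 2) ∧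
      Real.exp (a T)
        = Real.exp (-∫ x in ε..β, Real.sin x / Real.sqrt (Real.cos x ^ 2 + κ ^ 2)) := by
  set f : ℝ → ℝ := fun x => Real.sin x / Real.sqrt (Real.cos x ^ 2 + κ ^ 2) with hf_def
  have hpos : ∀ x : ℝ, 0 < Real.cos x ^ 2 + κ ^ 2 := fun x =>
    add_pos_of_nonneg_of_pos (sq_nonneg _) (pow_pos hκ 2)
  have hsqrt : ∀ x : ℝ, Real.sqrt (Real.cos x ^ 2 + κ ^ 2) ≠ 0 := fun x =>
    (Real.sqrt_pos.2 (hpos x)).ne'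
  have hfc : Continuous f := by
    apply Continuous.div Real.continuous_sin
    · exact (Real.continuous_cos.pow 2).add continuous_const |>.sqrt
    · exact hsqrt
  set g : ℝ → ℝ := fun y => ∫ x in ε..y, f x with hg_def
  have hg : ∀ y : ℝ, HasDerivAt g (f y) y := fun y =>
    intervalIntegral.integral_hasDerivAt_right (hfc.intervalIntegrable ε y)
      (hfc.stronglyMeasurableAtFilter _ _) hfc.continuousAt
  -- h := a + g ∘ θ has zero derivative on [0, T]
  have hh : ∀ t ∈ Set.Icc 0 T, HasDerivWithinAt (fun t => a t + g (θ t)) 0 (Set.Icc 0 T) t := by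
    intro t ht
    have h1 := haderiv t ht
    have h2 := ((hg (θ t)).comp_hasDerivWithinAt t (hderiv t ht))
    have := h1.add h2
    refine this.congr_deriv ?_
    have hs := hsqrt (θ t)
    simp only [hf_def]
    field_simp
    ring
  have hconst : ∀ t ∈ Set.Icc 0 T, (fun t => a t + g (θ t)) t = (fun t => a t + g (θ t)) 0 := by
    apply constant_of_has_deriv_right_zero
    · intro t ht
      exact ((hh t ht).continuousWithinAt)
    · intro t ht
      exact (hh t (Set.mem_Icc_of_Ico ht)).mono_of_mem_nhdsWithin (Icc_mem_nhdsGE_of_mem ht)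
  have hT' := hconst T (Set.right_mem_Icc.2 hT)
  simp only [hθT, hθ0, ha0, zero_add] at hT'
  have hgε : g ε = 0 := by simp [hg_def]
  rw [hgε] at hT'
  have : a T = -g β := by linarith
  exact ⟨this, by rw [this]⟩
end
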